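/- Let n ≥ 2 be a natural number, T > 0, and 0 < α ≤ 1 ≤ β. Let f : [0,∞) × [0,T] → ℝ be continuous, twice continuously differentiable in r and once in t on (0,∞) × (0,T], satisfying the parabolic equation ∂_t f = f⁻² ∂²_r f − 2 f⁻³ (∂_r f)² + ((n−1)/r − 1/(r f²)) ∂_r f − ((n−1)/(r² f)) (f² − 1) for all r > 0 and t ∈ (0,T], with α ≤ f(r,0) ≤ β for all r ≥ 0, f(0,t) = 1 for all t, and f(r,t) → 1 as r → ∞ uniformly in t. Then α ≤ f(r,t) ≤ β for all (r,t) ∈ [0,∞) × [0,T]. -/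

import Mathlib

open Set Filter Topology

/-- Second derivative test at an interior local minimum. -/
lemma aux_second_deriv_min {g g' : ℝ → ℝ} {a g'' : ℝ} (ha : 0 < a)
    (hg : ∀ y, 0 < y → HasDerivAt g (g' y) y)
    (hg'a : g' a = 0) (hg'' : HasDerivAt g' g'' a)
    (hmin : IsLocalMin g a) : 0 ≤ g'' := by
  by_contra hneg
  push_neg at hneg
  have hslope : Tendsto (slope g' a) (𝓝[≠] a) (𝓝 g'') :=
    hasDerivAt_iff_tendsto_slope.mp hg''
  have h1 : ∀ᶠ y in 𝓝[>] a, slope g' a y < 0 :=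
    (hslope.eventually_lt_const hneg).filter_mono
      (nhdsWithin_mono a (fun y hy => ne_of_gt hy))
  have h2 : ∀ᶠ y in 𝓝[>] a, g a ≤ g y := hmin.filter_mono nhdsWithin_le_nhds
  obtain ⟨b, hab, hsub⟩ := mem_nhdsGT_iff_exists_Ioc_subset.mp (h1.and h2)
  have hblt : a < b := hab
  have hgb : g a ≤ g b := (hsub ⟨hblt, le_refl b⟩).2
  have hcont : ContinuousOn g (Icc a b) := fun y hy =>
    ((hg y (lt_of_lt_of_le ha hy.1)).continuousAt).continuousWithinAt
  have hderiv : ∀ y ∈ Ioo a b, HasDerivAt g (g' y) y :=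
    fun y hy => hg y (ha.trans hy.1)
  obtain ⟨ξ, hξ, hξeq⟩ := exists_hasDerivAt_eq_slope g g' hblt hcont hderiv
  have hξneg : g' ξ < 0 := by
    have hs := (hsub ⟨hξ.1, hξ.2.le⟩).1
    rw [slope_def_field, hg'a] at hs
    have hd : 0 < ξ - a := sub_pos.mpr hξ.1
    by_contra hge
    push_neg at hge
    have : 0 ≤ (g' ξ - 0) / (ξ - a) := div_nonneg (by linarith) hd.le
    linarith
  have : 0 ≤ g' ξ := by
    rw [hξeq]
    exact div_nonneg (by linarith) (by linarith [hξ.2, hblt])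
  linarith

/-- The (within `Icc 0 T`) time derivative is nonpositive at a right-endpoint minimum. -/
lemma aux_left_deriv_nonpos {g : ℝ → ℝ} {T t₀ g' : ℝ} (h0 : 0 < t₀) (hT : t₀ ≤ T)
    (hd : HasDerivWithinAt g g' (Icc 0 T) t₀)
    (hmin : ∀ s ∈ Icc 0 t₀, g t₀ ≤ g s) : g' ≤ 0 := by
  have hd' : HasDerivWithinAt g g' (Icc 0 t₀) t₀ :=
    hd.mono (Icc_subset_Icc_right hT)
  have hslope := hasDerivWithinAt_iff_tendsto_slope.mp hd'
  rw [show Icc (0:ℝ) t₀ \ {t₀} = Ico 0 t₀ from Icc_sdiff_right] at hslope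
  have hne : (𝓝[Ico (0:ℝ) t₀] t₀).NeBot := by
    apply mem_closure_iff_nhdsWithin_neBot.mp
    rw [closure_Ico h0.ne]
    exact ⟨h0.le, le_refl _⟩
  refine le_of_tendsto hslope ?_
  filter_upwards [self_mem_nhdsWithin] with s hs
  rw [slope_def_field]
  exact div_nonpos_of_nonneg_of_nonpos
    (by linarith [hmin s ⟨hs.1, hs.2.le⟩]) (by linarith [hs.2])

/-- First-touching point for a continuous function dipping to level `c`. -/
lemma aux_exists_first_touch {f : ℝ → ℝ → ℝ} {M T c : ℝ} (hM : 0 < M) (hT : 0 < T)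
    (hcont : ContinuousOn (fun q : ℝ × ℝ => f q.1 q.2) (Icc 0 M ×ˢ Icc 0 T))
    (hbad : ∃ x ∈ Icc (0:ℝ) M, ∃ t ∈ Icc (0:ℝ) T, f x t ≤ c)
    (hinit : ∀ x ∈ Icc (0:ℝ) M, c < f x 0) :
    ∃ x' ∈ Icc (0:ℝ) M, ∃ t' ∈ Ioc (0:ℝ) T, f x' t' = c ∧
      ∀ x ∈ Icc (0:ℝ) M, ∀ s ∈ Icc (0:ℝ) t', c ≤ f x s := by
  set K : Set (ℝ × ℝ) := Icc 0 M ×ˢ Icc 0 T with hK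
  have hKc : IsCompact K := isCompact_Icc.prod isCompact_Icc
  set B : Set (ℝ × ℝ) := K ∩ (fun q : ℝ × ℝ => f q.1 q.2) ⁻¹' Iic c with hB
  have hBclosed : IsClosed B :=
    hcont.preimage_isClosed_of_isClosed (isClosed_Icc.prod isClosed_Icc) isClosed_Iic
  have hBc : IsCompact B := hKc.of_isClosed_subset hBclosed inter_subset_left
  have hBne : B.Nonempty := by
    obtain ⟨x, hx, t, ht, hft⟩ := hbad
    exact ⟨(x, t), ⟨⟨hx, ht⟩, hft⟩⟩
  obtain ⟨q, hqB, hqmin⟩ := hBc.exists_isMinOn hBne continuous_snd.continuousOn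
  obtain ⟨⟨hqx, hqt⟩, hqc⟩ := hqB
  have ht'0 : 0 < q.2 := by
    rcases eq_or_lt_of_le hqt.1 with h | h
    · exfalso
      have : c < f q.1 0 := hinit q.1 hqx
      rw [h] at this
      exact absurd hqc (not_le.mpr this)
    · exact h
  -- continuity in time at fixed x
  have hline : ∀ x ∈ Icc (0:ℝ) M, ContinuousOn (fun u => f x u) (Icc 0 T) := by
    intro x hx
    have : ContinuousOn (fun u : ℝ => ((x, u) : ℝ × ℝ)) (Icc 0 T) :=
      (continuous_const.prodMk continuous_id).continuousOn
    exact hcont.comp this (fun u hu => ⟨hx, hu⟩)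
  have key : ∀ x ∈ Icc (0:ℝ) M, ∀ s ∈ Icc (0:ℝ) q.2, c ≤ f x s := by
    intro x hx s hs
    have hstrict : ∀ u ∈ Ico (0:ℝ) q.2, c ≤ f x u := by
      intro u hu
      by_contra hlt
      push_neg at hlt
      have : (x, u) ∈ B := ⟨⟨hx, ⟨hu.1, hu.2.le.trans hqt.2⟩⟩, hlt.le⟩
      have := hqmin this
      exact absurd hu.2 (not_lt.mpr this)
    rcases lt_or_eq_of_le hs.2 with h | h
    · exact hstrict s ⟨hs.1, h⟩
    · -- s = q.2 : pass to the limit from the left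
      rw [h]
      have hne : (𝓝[Ico (0:ℝ) q.2] q.2).NeBot := by
        apply mem_closure_iff_nhdsWithin_neBot.mp
        rw [closure_Ico ht'0.ne]
        exact ⟨ht'0.le, le_refl _⟩
      have hcw : ContinuousWithinAt (fun u => f x u) (Ico 0 q.2) q.2 :=
        ((hline x hx) q.2 ⟨ht'0.le, hqt.2⟩).mono
          (fun u hu => ⟨hu.1, hu.2.le.trans hqt.2⟩)
      refine ge_of_tendsto hcw ?_
      filter_upwards [self_mem_nhdsWithin] with u hu
      exact hstrict u hu
  have hfeq : f q.1 q.2 = c :=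
    le_antisymm hqc (key q.1 hqx q.2 ⟨ht'0.le, le_refl _⟩)
  exact ⟨q.1, hqx, q.2, ⟨ht'0, hqt.2⟩, hfeq, key⟩

/-- Maximum-principle bound for the Hamilton–DeTurck flow in Schwarzschild form: the
metric coefficient `f = exp(λ)` evolving by the quasilinear parabolic equation
`∂ₜf = f⁻² f_rr - 2 f⁻³ f_r² + ((n-1)/r - 1/(r f²)) f_r - ((n-1)/(r² f))(f² - 1)`
stays between its initial bounds `α ≤ 1 ≤ β`, given `f(0,t) = 1` and `f → 1`
uniformly as `r → ∞`. -/
theorem maximum_principle_hamilton_deturck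
    (n : ℕ) (hn : 2 ≤ n) (T : ℝ) (hT : 0 < T)
    (α β : ℝ) (hα : 0 < α) (hα1 : α ≤ 1) (h1β : 1 ≤ β)
    (f ft fr frr : ℝ → ℝ → ℝ)
    (hf_cont : ContinuousOn (fun q : ℝ × ℝ => f q.1 q.2)
      (Set.Ici (0 : ℝ) ×ˢ Set.Icc (0 : ℝ) T))
    (hft : ∀ x > (0 : ℝ), ∀ t ∈ Set.Ioc (0 : ℝ) T,
      HasDerivWithinAt (fun τ => f x τ) (ft x t) (Set.Icc 0 T) t)
    (hfr : ∀ x > (0 : ℝ), ∀ t ∈ Set.Ioc (0 : ℝ) T,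
      HasDerivAt (fun y => f y t) (fr x t) x)
    (hfrr : ∀ x > (0 : ℝ), ∀ t ∈ Set.Ioc (0 : ℝ) T,
      HasDerivAt (fun y => fr y t) (frr x t) x)
    (hfr_cont : ContinuousOn (fun q : ℝ × ℝ => fr q.1 q.2)
      (Set.Ioi (0 : ℝ) ×ˢ Set.Ioc (0 : ℝ) T))
    (hfrr_cont : ContinuousOn (fun q : ℝ × ℝ => frr q.1 q.2)
      (Set.Ioi (0 : ℝ) ×ˢ Set.Ioc (0 : ℝ) T))
    (hft_cont : ContinuousOn (fun q : ℝ × ℝ => ft q.1 q.2)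
      (Set.Ioi (0 : ℝ) ×ˢ Set.Ioc (0 : ℝ) T))
    (hpde : ∀ x > (0 : ℝ), ∀ t ∈ Set.Ioc (0 : ℝ) T,
      ft x t = ((f x t) ^ 2)⁻¹ * frr x t - 2 * ((f x t) ^ 3)⁻¹ * (fr x t) ^ 2 +
        (((n : ℝ) - 1) / x - 1 / (x * (f x t) ^ 2)) * fr x t -
        (((n : ℝ) - 1) / (x ^ 2 * f x t)) * ((f x t) ^ 2 - 1))
    (hinit : ∀ x ≥ (0 : ℝ), α ≤ f x 0 ∧ f x 0 ≤ β)
    (hbdry : ∀ t ∈ Set.Icc (0 : ℝ) T, f 0 t = 1)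
    (hlim : ∀ ε > (0 : ℝ), ∃ M : ℝ, ∀ x ≥ M, ∀ t ∈ Set.Icc (0 : ℝ) T,
      |f x t - 1| ≤ ε) :
    ∀ x ≥ (0 : ℝ), ∀ t ∈ Set.Icc (0 : ℝ) T, α ≤ f x t ∧ f x t ≤ β := by
  have hn1 : (1:ℝ) ≤ (n:ℝ) - 1 := by
    have : (2:ℝ) ≤ (n:ℝ) := by exact_mod_cast hn
    linarith
  intro x hx t ht
  constructor
  · -- lower bound
    by_contra hcon
    push_neg at hcon
    set c : ℝ := (max (f x t) 0 + α) / 2 with hc_def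
    have hmax0 : (0:ℝ) ≤ max (f x t) 0 := le_max_right _ _
    have hc_pos : 0 < c := by rw [hc_def]; linarith
    have hcα : c < α := by
      have h1 : max (f x t) 0 < α := max_lt hcon hα
      rw [hc_def]; linarith
    have hc1 : c < 1 := lt_of_lt_of_le hcα hα1
    have hfxc : f x t < c := by
      have := le_max_left (f x t) 0
      rw [hc_def]; linarith
    obtain ⟨M, hM⟩ := hlim ((1 - c) / 2) (by linarith)
    set M' : ℝ := max M (x + 1) with hM'def
    have hM'pos : 0 < M' := lt_of_lt_of_le (by linarith) (le_max_right _ _)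
    have hxM' : x ≤ M' := le_trans (by linarith) (le_max_right _ _)
    have htail : ∀ x' ≥ M', ∀ t' ∈ Set.Icc (0:ℝ) T, (1 + c) / 2 ≤ f x' t' := by
      intro x' hx' t' ht'
      have h := abs_le.mp (hM x' (le_trans (le_max_left _ _) hx') t' ht')
      linarith [h.1]
    have hcont' : ContinuousOn (fun q : ℝ × ℝ => f q.1 q.2)
        (Set.Icc 0 M' ×ˢ Set.Icc 0 T) :=
      hf_cont.mono (Set.prod_mono Set.Icc_subset_Ici_self subset_rfl)
    obtain ⟨x', hx'mem, t', ht'mem, htouch, hkey⟩ :=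
      aux_exists_first_touch hM'pos hT hcont'
        ⟨x, ⟨hx, hxM'⟩, t, ht, hfxc.le⟩
        (fun x' hx' => lt_of_lt_of_le hcα (hinit x' hx'.1).1)
    have ht'Icc : t' ∈ Set.Icc (0:ℝ) T := ⟨ht'mem.1.le, ht'mem.2⟩
    have hx'pos : 0 < x' := by
      rcases eq_or_lt_of_le hx'mem.1 with h | h
      · exfalso
        rw [← h] at htouch
        rw [hbdry t' ht'Icc] at htouch
        linarith
      · exact h
    have hminOn : IsMinOn (fun y => f y t') (Set.Ici 0) x' := by
      apply isMinOn_iff.mpr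
      intro y hy
      show f x' t' ≤ f y t'
      rw [htouch]
      rcases le_or_gt y M' with h | h
      · exact hkey y ⟨hy, h⟩ t' ⟨ht'mem.1.le, le_refl _⟩
      · linarith [htail y h.le t' ht'Icc]
    have hlocmin : IsLocalMin (fun y => f y t') x' :=
      hminOn.isLocalMin (Ici_mem_nhds hx'pos)
    have hfr0 : fr x' t' = 0 :=
      hlocmin.hasDerivAt_eq_zero (hfr x' hx'pos t' ht'mem)
    have hfrr0 : 0 ≤ frr x' t' :=
      aux_second_deriv_min hx'pos (fun y hy => hfr y hy t' ht'mem) hfr0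
        (hfrr x' hx'pos t' ht'mem) hlocmin
    have hft0 : ft x' t' ≤ 0 := by
      apply aux_left_deriv_nonpos ht'mem.1 ht'mem.2 (hft x' hx'pos t' ht'mem)
      intro s hs
      rw [htouch]
      exact hkey x' hx'mem s hs
    have e := hpde x' hx'pos t' ht'mem
    rw [htouch, hfr0] at e
    have e' : ft x' t' = (c ^ 2)⁻¹ * frr x' t' -
        ((n:ℝ) - 1) / (x' ^ 2 * c) * (c ^ 2 - 1) := by
      rw [e]; ring
    have hD : 0 < ((n:ℝ) - 1) / (x' ^ 2 * c) :=
      div_pos (by linarith) (by positivity)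
    have h2 : 0 ≤ (c ^ 2)⁻¹ * frr x' t' :=
      mul_nonneg (inv_nonneg.mpr (by positivity)) hfrr0
    have h3 : ((n:ℝ) - 1) / (x' ^ 2 * c) * (c ^ 2 - 1) < 0 :=
      mul_neg_of_pos_of_neg hD (by nlinarith)
    linarith
  · -- upper bound
    by_contra hcon
    push_neg at hcon
    set c : ℝ := (β + f x t) / 2 with hc_def
    have hβc : β < c := by rw [hc_def]; linarith
    have hcf : c < f x t := by rw [hc_def]; linarith
    have hc1 : 1 < c := lt_of_le_of_lt h1β hβc
    obtain ⟨M, hM⟩ := hlim ((c - 1) / 2) (by linarith)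
    set M' : ℝ := max M (x + 1) with hM'def
    have hM'pos : 0 < M' := lt_of_lt_of_le (by linarith) (le_max_right _ _)
    have hxM' : x ≤ M' := le_trans (by linarith) (le_max_right _ _)
    have htail : ∀ x' ≥ M', ∀ t' ∈ Set.Icc (0:ℝ) T, f x' t' ≤ (1 + c) / 2 := by
      intro x' hx' t' ht'
      have h := abs_le.mp (hM x' (le_trans (le_max_left _ _) hx') t' ht')
      linarith [h.2]
    have hcont' : ContinuousOn (fun q : ℝ × ℝ => -f q.1 q.2)
        (Set.Icc 0 M' ×ˢ Set.Icc 0 T) :=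
      (hf_cont.mono (Set.prod_mono Set.Icc_subset_Ici_self subset_rfl)).neg
    obtain ⟨x', hx'mem, t', ht'mem, htouch, hkey⟩ :=
      aux_exists_first_touch (f := fun a b => -f a b) (c := -c) hM'pos hT hcont'
        ⟨x, ⟨hx, hxM'⟩, t, ht, by show -f x t ≤ -c; linarith⟩
        (fun x' hx' => by
          show -c < -f x' 0
          have := (hinit x' hx'.1).2
          linarith)
    have htouch' : f x' t' = c := by
      have : -f x' t' = -c := htouch
      linarith
    have hkey' : ∀ y ∈ Set.Icc (0:ℝ) M', ∀ s ∈ Set.Icc (0:ℝ) t', f y s ≤ c := by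
      intro y hy s hs
      have : -c ≤ -f y s := hkey y hy s hs
      linarith
    have ht'Icc : t' ∈ Set.Icc (0:ℝ) T := ⟨ht'mem.1.le, ht'mem.2⟩
    have hx'pos : 0 < x' := by
      rcases eq_or_lt_of_le hx'mem.1 with h | h
      · exfalso
        rw [← h] at htouch'
        rw [hbdry t' ht'Icc] at htouch'
        linarith
      · exact h
    have hmaxOn : IsMaxOn (fun y => f y t') (Set.Ici 0) x' := by
      apply isMaxOn_iff.mpr
      intro y hy
      show f y t' ≤ f x' t'
      rw [htouch']
      rcases le_or_gt y M' with h | h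
      · exact hkey' y ⟨hy, h⟩ t' ⟨ht'mem.1.le, le_refl _⟩
      · linarith [htail y h.le t' ht'Icc]
    have hlocmax : IsLocalMax (fun y => f y t') x' :=
      hmaxOn.isLocalMax (Ici_mem_nhds hx'pos)
    have hfr0 : fr x' t' = 0 :=
      hlocmax.hasDerivAt_eq_zero (hfr x' hx'pos t' ht'mem)
    have hfrr0 : frr x' t' ≤ 0 := by
      have hneg : 0 ≤ -frr x' t' :=
        aux_second_deriv_min (g := fun y => -f y t') (g' := fun y => -fr y t')
          hx'pos (fun y hy => (hfr y hy t' ht'mem).neg)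
          (neg_eq_zero.mpr hfr0) ((hfrr x' hx'pos t' ht'mem).neg) hlocmax.neg
      linarith
    have hft0 : 0 ≤ ft x' t' := by
      have : -ft x' t' ≤ 0 := by
        apply aux_left_deriv_nonpos ht'mem.1 ht'mem.2
          ((hft x' hx'pos t' ht'mem).neg)
        intro s hs
        show -f x' t' ≤ -f x' s
        have := hkey' x' hx'mem s hs
        rw [htouch']
        linarith
      linarith
    have e := hpde x' hx'pos t' ht'mem
    rw [htouch', hfr0] at e
    have e' : ft x' t' = (c ^ 2)⁻¹ * frr x' t' -
        ((n:ℝ) - 1) / (x' ^ 2 * c) * (c ^ 2 - 1) := by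
      rw [e]; ring
    have hD : 0 < ((n:ℝ) - 1) / (x' ^ 2 * c) :=
      div_pos (by linarith) (by positivity)
    have h2 : (c ^ 2)⁻¹ * frr x' t' ≤ 0 :=
      mul_nonpos_of_nonneg_of_nonpos (inv_nonneg.mpr (by positivity)) hfrr0
    have h3 : 0 < ((n:ℝ) - 1) / (x' ^ 2 * c) * (c ^ 2 - 1) :=
      mul_pos hD (by nlinarith)
    linarith
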